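/- Let q ≥ 2 be an integer, let I be a finite index set, and for each i ∈ I let r_i ∈ ℤ and d_i ∈ ℕ. Assume ∑_{i∈I} r_i = 0. Set m := ∑_{i : d_i odd} r_i and S := ∑_{i∈I} r_i·d_i. Then (q-1)(q²-1) divides ∑_{i∈I} r_i·q^{d_i} if and only if all three of the following hold: (a) (q+1) divides m; (b) (q-1) divides S; (c) m/(q+1) ≡ S/(q-1) (mod 2). -/

import Mathlib

lemma aux_pow (q : ℤ) (d : ℕ) :
    q ^ d = (q ^ 2 - 1) * ((∑ j ∈ Finset.range (d / 2), q ^ (2 * j)) * q ^ (d % 2))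
      + (if Odd d then q - 1 else 0) + 1 := by
  have hgeom : ∀ k : ℕ,
      (q ^ 2 - 1) * (∑ j ∈ Finset.range k, q ^ (2 * j)) = q ^ (2 * k) - 1 := by
    intro k
    have h := geom_sum_mul (q ^ 2) k
    simp only [← pow_mul] at h
    linear_combination h
  rcases Nat.even_or_odd d with h | h
  · obtain ⟨k, hk⟩ := h
    have hd : d = 2 * k := by omega
    subst hd
    have h2 : ¬ Odd (2 * k) := by simp [Nat.not_odd_iff_even]
    rw [if_neg h2]
    have e1 : 2 * k / 2 = k := by omega
    have e2 : 2 * k % 2 = 0 := by omega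
    rw [e1, e2]
    linear_combination -hgeom k
  · obtain ⟨k, hk⟩ := h
    subst hk
    have h2 : Odd (2 * k + 1) := ⟨k, rfl⟩
    rw [if_pos h2]
    have e1 : (2 * k + 1) / 2 = k := by omega
    have e2 : (2 * k + 1) % 2 = 1 := by omega
    rw [e1, e2]
    linear_combination -q * hgeom k

lemma aux_mod (q : ℤ) (k e : ℕ) :
    (q - 1) ∣ (∑ j ∈ Finset.range k, q ^ (2 * j)) * q ^ e - k := by
  have h1 : ∀ n : ℕ, (q - 1) ∣ q ^ n - 1 := fun n => by
    simpa using sub_dvd_pow_sub_pow q 1 n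
  have h2 : (q - 1) ∣ (∑ j ∈ Finset.range k, q ^ (2 * j)) - k := by
    have e : (∑ j ∈ Finset.range k, q ^ (2 * j)) - (k : ℤ)
        = ∑ j ∈ Finset.range k, (q ^ (2 * j) - 1) := by
      rw [Finset.sum_sub_distrib]; simp
    rw [e]
    exact Finset.dvd_sum fun j _ => h1 _
  have he : (∑ j ∈ Finset.range k, q ^ (2 * j)) * q ^ e - (k : ℤ)
      = ((∑ j ∈ Finset.range k, q ^ (2 * j)) - k) * q ^ e + k * (q ^ e - 1) := by ring
  rw [he]
  exact dvd_add (h2.mul_right _) ((h1 e).mul_left _)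

theorem stmt_4 (q : ℤ) (hq : 2 ≤ q) {I : Type*} [Fintype I]
    (r : I → ℤ) (d : I → ℕ) (hsum : ∑ i, r i = 0) :
    ((q - 1) * (q ^ 2 - 1) ∣ ∑ i, r i * q ^ (d i)) ↔
      ((q + 1) ∣ ∑ i ∈ Finset.univ.filter (fun i => Odd (d i)), r i ∧
       (q - 1) ∣ ∑ i, r i * (d i : ℤ) ∧
       (∑ i ∈ Finset.univ.filter (fun i => Odd (d i)), r i) / (q + 1) ≡
         (∑ i, r i * (d i : ℤ)) / (q - 1) [ZMOD 2]) := by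
  have hq1 : (q - 1) ≠ 0 := by omega
  have hq2 : (q + 1) ≠ 0 := by omega
  set m := ∑ i ∈ Finset.univ.filter (fun i => Odd (d i)), r i with hm
  set S := ∑ i, r i * (d i : ℤ) with hS
  set U : ℤ := ∑ i, r i * ((∑ j ∈ Finset.range (d i / 2), q ^ (2 * j)) * q ^ (d i % 2))
    with hU
  set F : ℤ := ∑ i, r i * ((d i / 2 : ℕ) : ℤ) with hF
  -- m as a full sum with ifs
  have hmif : m = ∑ i, (if Odd (d i) then r i else 0) := by
    rw [hm, Finset.sum_filter]
  -- main decomposition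
  have hN : ∑ i, r i * q ^ (d i) = (q ^ 2 - 1) * U + (q - 1) * m := by
    have step : ∀ i : I, r i * q ^ (d i)
        = (q ^ 2 - 1) * (r i * ((∑ j ∈ Finset.range (d i / 2), q ^ (2 * j)) * q ^ (d i % 2)))
          + (if Odd (d i) then (q - 1) * r i else 0) + r i := by
      intro i
      rw [aux_pow q (d i)]
      split_ifs <;> ring
    calc ∑ i, r i * q ^ (d i)
        = ∑ i, ((q ^ 2 - 1) * (r i * ((∑ j ∈ Finset.range (d i / 2), q ^ (2 * j)) * q ^ (d i % 2)))
          + (if Odd (d i) then (q - 1) * r i else 0) + r i) :=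
          Finset.sum_congr rfl fun i _ => step i
      _ = (q ^ 2 - 1) * U + (q - 1) * m + ∑ i, r i := by
          have hif : (∑ i, if Odd (d i) then (q - 1) * r i else 0)
              = (q - 1) * ∑ i, (if Odd (d i) then r i else 0) := by
            rw [Finset.mul_sum]
            exact Finset.sum_congr rfl fun i _ => by split_ifs <;> ring
          rw [Finset.sum_add_distrib, Finset.sum_add_distrib, hif, ← hmif, ← Finset.mul_sum, ← hU]
      _ = (q ^ 2 - 1) * U + (q - 1) * m := by rw [hsum]; ring
  -- S = 2F + m
  have hSF : S = 2 * F + m := by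
    have hdm : ∀ i : I, ((d i : ℤ)) = 2 * ((d i / 2 : ℕ) : ℤ) + ((d i % 2 : ℕ) : ℤ) := by
      intro i; omega
    have hmod : ∀ i : I, ((d i % 2 : ℕ) : ℤ) = if Odd (d i) then 1 else 0 := by
      intro i
      rcases Nat.even_or_odd (d i) with h | h
      · rw [if_neg (Nat.not_odd_iff_even.mpr h)]
        have : d i % 2 = 0 := Nat.even_iff.mp h
        simp [this]
      · rw [if_pos h]
        have : d i % 2 = 1 := Nat.odd_iff.mp h
        simp [this]
    calc S = ∑ i, r i * (2 * ((d i / 2 : ℕ) : ℤ) + ((d i % 2 : ℕ) : ℤ)) :=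
          Finset.sum_congr rfl fun i _ => by rw [← hdm i]
      _ = ∑ i, (2 * (r i * ((d i / 2 : ℕ) : ℤ)) + (if Odd (d i) then r i else 0)) :=
          Finset.sum_congr rfl fun i _ => by rw [hmod i]; split_ifs <;> ring
      _ = 2 * F + m := by
          rw [Finset.sum_add_distrib, hF, ← Finset.mul_sum, hmif]
  -- U ≡ F mod (q-1)
  have hUF : (q - 1) ∣ U - F := by
    rw [hU, hF, ← Finset.sum_sub_distrib]
    refine Finset.dvd_sum fun i _ => ?_
    have h := aux_mod q (d i / 2) (d i % 2)
    have e : r i * ((∑ j ∈ Finset.range (d i / 2), q ^ (2 * j)) * q ^ (d i % 2))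
        - r i * ((d i / 2 : ℕ) : ℤ)
        = r i * ((∑ j ∈ Finset.range (d i / 2), q ^ (2 * j)) * q ^ (d i % 2)
            - ((d i / 2 : ℕ) : ℤ)) := by ring
    rw [e]
    exact h.mul_left _
  rw [hN]
  have key1 : ((q - 1) * (q ^ 2 - 1) ∣ (q ^ 2 - 1) * U + (q - 1) * m)
      ↔ ((q - 1) * (q + 1) ∣ (q + 1) * U + m) := by
    have e1 : (q ^ 2 - 1) * U + (q - 1) * m = (q - 1) * ((q + 1) * U + m) := by ring
    have e2 : (q - 1) * (q ^ 2 - 1) = (q - 1) * ((q - 1) * (q + 1)) := by ring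
    rw [e1, e2, mul_dvd_mul_iff_left hq1]
  rw [key1]
  constructor
  · intro h'
    have ha : (q + 1) ∣ m := by
      have h1 : (q + 1) ∣ (q + 1) * U + m :=
        dvd_trans ⟨q - 1, by ring⟩ h'
      have h2 : (q + 1) ∣ (q + 1) * U := ⟨U, rfl⟩
      have := h1.sub h2
      simpa using this
    obtain ⟨m', hm'⟩ := ha
    have hdiv : m / (q + 1) = m' := by rw [hm', Int.mul_ediv_cancel_left _ hq2]
    have h2 : (q - 1) ∣ U + m' := by
      rw [hm'] at h'
      have e : (q + 1) * U + (q + 1) * m' = (q + 1) * (U + m') := by ring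
      have e2 : (q - 1) * (q + 1) = (q + 1) * (q - 1) := by ring
      rw [e, e2, mul_dvd_mul_iff_left hq2] at h'
      exact h'
    have h3 : (q - 1) ∣ F + m' := by
      have e : F + m' = (U + m') - (U - F) := by ring
      rw [e]; exact h2.sub hUF
    obtain ⟨k, hk⟩ := h3
    have hSval : S = (q - 1) * (2 * k + m') := by
      linear_combination hSF + hm' + 2 * hk
    have hb : (q - 1) ∣ S := ⟨2 * k + m', hSval⟩
    have hSdiv : S / (q - 1) = 2 * k + m' := by
      rw [hSval, Int.mul_ediv_cancel_left _ hq1]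
    refine ⟨⟨m', hm'⟩, hb, ?_⟩
    rw [hdiv, hSdiv]
    exact Int.modEq_iff_dvd.mpr ⟨k, by ring⟩
  · rintro ⟨ha, hb, hc⟩
    obtain ⟨m', hm'⟩ := ha
    obtain ⟨s', hs'⟩ := hb
    have hdiv : m / (q + 1) = m' := by rw [hm', Int.mul_ediv_cancel_left _ hq2]
    have hSdiv : S / (q - 1) = s' := by rw [hs', Int.mul_ediv_cancel_left _ hq1]
    rw [hdiv, hSdiv] at hc
    have h2 : (2 : ℤ) ∣ s' - m' := Int.ModEq.dvd hc
    obtain ⟨t, ht⟩ := h2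
    have hFm : F + m' = (q - 1) * t := by
      have h4 : 2 * (F + m') = 2 * ((q - 1) * t) := by
        linear_combination -hSF - hm' + hs' + (q - 1) * ht
      exact mul_left_cancel₀ two_ne_zero h4
    have h3 : (q - 1) ∣ U + m' := by
      have e : U + m' = (U - F) + (F + m') := by ring
      rw [e]; exact dvd_add hUF ⟨t, hFm⟩
    obtain ⟨w, hw⟩ := h3
    rw [hm']
    exact ⟨w, by linear_combination (q + 1) * hw⟩
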